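/- For a complex matrix A, the N-th symmetric power of the conjugate transpose satisfies (A*)̄ = B^{-1} (Ā)* B, where * denotes Hermitian adjoint and B is the diagonal matrix of multinomial coefficients. -/

import Mathlib

open MvPolynomial Matrix BigOperators

/-- Multi-indices of `d+1` entries with total degree `N`. -/
abbrev MIdx (d N : ℕ) := {m : Fin (d+1) → ℕ // ∑ i, m i = N}

instance (d N : ℕ) : Fintype (MIdx d N) :=
  Fintype.subtype (Finset.Nat.antidiagonalTuple (d+1) N)
    (fun _ => Finset.Nat.mem_antidiagonalTuple)

/-- The `(m,n)` matrix element of the symmetric power of `A`: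
the coefficient of `x^n` in `(Ax)^m`. -/
noncomputable def symPowEntry {R : Type} [CommSemiring R] {d : ℕ}
    (A : Matrix (Fin (d+1)) (Fin (d+1)) R) (m n : Fin (d+1) → ℕ) : R :=
  MvPolynomial.coeff (Finsupp.equivFunOnFinite.symm n)
    (∏ i, (∑ j, MvPolynomial.C (A i j) * MvPolynomial.X j) ^ m i)

/-- The `N`-th symmetric power of `A`, as a matrix indexed by multi-indices
of total degree `N`. -/
noncomputable def symPow {R : Type} [CommSemiring R] (d N : ℕ)
    (A : Matrix (Fin (d+1)) (Fin (d+1)) R) : Matrix (MIdx d N) (MIdx d N) R :=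
  fun m n => symPowEntry A m.1 n.1

/-- `Γ(g)_{mn}`: the coefficient of `x^n` in `(Σ_{μ,λ} g_{μλ} x_λ ∂_μ) x^m`. -/
noncomputable def gammaEntry {d : ℕ} (g : Matrix (Fin (d+1)) (Fin (d+1)) ℂ)
    (m n : Fin (d+1) → ℕ) : ℂ :=
  MvPolynomial.coeff (Finsupp.equivFunOnFinite.symm n)
    (∑ μ, ∑ lam, MvPolynomial.C (g μ lam) *
      (MvPolynomial.X lam * MvPolynomial.pderiv μ
        (MvPolynomial.monomial (Finsupp.equivFunOnFinite.symm m) 1)))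

/-- The degree-`N` generator `Γ(g)` of the symmetric representation. -/
noncomputable def gammaMat (d N : ℕ) (g : Matrix (Fin (d+1)) (Fin (d+1)) ℂ) :
    Matrix (MIdx d N) (MIdx d N) ℂ :=
  fun m n => gammaEntry g m.1 n.1

/-- The diagonal matrix `B` of multinomial coefficients of degree `N`. -/
noncomputable def multinomMat (d N : ℕ) : Matrix (MIdx d N) (MIdx d N) ℂ :=
  Matrix.diagonal fun m => (Nat.multinomial Finset.univ m.1 : ℂ)

/-- the two-variable finsupp -/
noncomputable def pairF {d : ℕ} (m n : Fin (d+1) → ℕ) : (Fin (d+1) ⊕ Fin (d+1)) →₀ ℕ :=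
  Finsupp.equivFunOnFinite.symm (Sum.elim m n)

@[simp] lemma pairF_inl {d : ℕ} (m n : Fin (d+1) → ℕ) (i : Fin (d+1)) :
    pairF m n (Sum.inl i) = m i := rfl

@[simp] lemma pairF_inr {d : ℕ} (m n : Fin (d+1) → ℕ) (j : Fin (d+1)) :
    pairF m n (Sum.inr j) = n j := rfl

noncomputable def bigS {d : ℕ} (A : Matrix (Fin (d+1)) (Fin (d+1)) ℂ) :
    MvPolynomial (Fin (d+1) ⊕ Fin (d+1)) ℂ :=
  ∑ i, MvPolynomial.X (Sum.inl i) * ∑ j, MvPolynomial.C (A i j) * MvPolynomial.X (Sum.inr j)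

lemma pairF_eq_sum_single {d : ℕ} (k : Fin (d+1) → ℕ) :
    pairF k 0 = ∑ i, Finsupp.single (Sum.inl i) (k i) := by
  ext s
  rw [Finsupp.finset_sum_apply]
  cases s with
  | inl i => simp [Finsupp.single_apply]
  | inr j => simp [Finsupp.single_apply]

lemma pairF_zero_eq_mapDomain {d : ℕ} (n : Fin (d+1) → ℕ) :
    pairF (0 : Fin (d+1) → ℕ) n
      = Finsupp.mapDomain Sum.inr (Finsupp.equivFunOnFinite.symm n) := by
  ext s
  cases s with
  | inl i =>
      rw [Finsupp.mapDomain_notin_range]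
      · rfl
      · rintro ⟨j, h⟩; cases h
  | inr j => rw [Finsupp.mapDomain_apply Sum.inr_injective]; rfl

lemma stepA {d N : ℕ} (A : Matrix (Fin (d+1)) (Fin (d+1)) ℂ) (m n : Fin (d+1) → ℕ)
    (hm : ∑ i, m i = N) :
    MvPolynomial.coeff (pairF m n) (bigS A ^ N)
      = (Nat.multinomial Finset.univ m : ℂ) * symPowEntry A m n := by
  classical
  rw [bigS, Finset.sum_pow_eq_sum_piAntidiag, MvPolynomial.coeff_sum]
  have hmem : m ∈ Finset.piAntidiag Finset.univ N := by
    simp [Finset.mem_piAntidiag, hm]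
  rw [Finset.sum_eq_single_of_mem m hmem]
  · -- main term
    simp_rw [mul_pow, Finset.prod_mul_distrib]
    have hX : (∏ i, MvPolynomial.X (Sum.inl i) ^ m i :
        MvPolynomial (Fin (d+1) ⊕ Fin (d+1)) ℂ) = monomial (pairF m 0) 1 := by
      simp_rw [X_pow_eq_monomial]
      rw [pairF_eq_sum_single, monomial_sum_one]
    have hQ : (∏ i, (∑ j, MvPolynomial.C (A i j) * MvPolynomial.X (Sum.inr j)) ^ m i :
        MvPolynomial (Fin (d+1) ⊕ Fin (d+1)) ℂ)
        = rename Sum.inr (∏ i, (∑ j, MvPolynomial.C (A i j) * MvPolynomial.X j) ^ m i) := by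
      simp [map_prod, map_pow, map_sum]
    rw [hX, hQ, ← map_natCast (MvPolynomial.C :
        ℂ →+* MvPolynomial (Fin (d+1) ⊕ Fin (d+1)) ℂ), MvPolynomial.coeff_C_mul,
      MvPolynomial.coeff_monomial_mul']
    rw [if_pos]
    · have hsub : pairF m n - pairF m 0 = pairF 0 n := by
        ext s
        cases s with
        | inl i => simp [Finsupp.tsub_apply]
        | inr j => simp [Finsupp.tsub_apply]
      rw [hsub, pairF_zero_eq_mapDomain,
        MvPolynomial.coeff_rename_mapDomain Sum.inr Sum.inr_injective]
      rw [symPowEntry]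
      ring
    · rw [Finsupp.le_def]
      intro s
      cases s with
      | inl i => simp
      | inr j => simp
  · -- other terms vanish
    intro k hk hkm
    simp_rw [mul_pow, Finset.prod_mul_distrib]
    have hX : (∏ i, MvPolynomial.X (Sum.inl i) ^ k i :
        MvPolynomial (Fin (d+1) ⊕ Fin (d+1)) ℂ) = monomial (pairF k 0) 1 := by
      simp_rw [X_pow_eq_monomial]
      rw [pairF_eq_sum_single, monomial_sum_one]
    rw [hX, ← map_natCast (MvPolynomial.C :
        ℂ →+* MvPolynomial (Fin (d+1) ⊕ Fin (d+1)) ℂ), ← mul_assoc,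
        mul_comm (MvPolynomial.C _) _, mul_assoc, MvPolynomial.coeff_monomial_mul']
    have hcond : ¬ pairF k 0 ≤ pairF m n := by
      intro hle
      apply hkm
      rw [Finsupp.le_def] at hle
      have hle' : ∀ i, k i ≤ m i := by
        intro i
        simpa using hle (Sum.inl i)
      have hks : ∑ i, k i = N := by
        rw [Finset.mem_piAntidiag] at hk
        exact hk.1
      funext i
      by_contra hne
      have hlt : k i < m i := lt_of_le_of_ne (hle' i) hne
      have : ∑ i, k i < ∑ i, m i :=
        Finset.sum_lt_sum (fun j _ => hle' j) ⟨i, Finset.mem_univ i, hlt⟩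
      omega
    simp [if_neg hcond]

lemma stepB {d N : ℕ} (A : Matrix (Fin (d+1)) (Fin (d+1)) ℂ) (m n : Fin (d+1) → ℕ) :
    MvPolynomial.coeff (pairF m n) (bigS A ^ N)
      = MvPolynomial.coeff (pairF n m) (bigS Aᵀ ^ N) := by
  have hswap : Function.Injective (Sum.swap : Fin (d+1) ⊕ Fin (d+1) → Fin (d+1) ⊕ Fin (d+1)) :=
    Function.LeftInverse.injective Sum.swap_leftInverse
  have hren : rename Sum.swap (bigS A) = bigS Aᵀ := by
    rw [bigS, bigS]
    simp only [Finset.mul_sum]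
    simp only [map_sum, _root_.map_mul, rename_X, rename_C, Sum.swap_inl, Sum.swap_inr]
    rw [Finset.sum_comm]
    refine Finset.sum_congr rfl fun i _ => Finset.sum_congr rfl fun j _ => ?_
    rw [Matrix.transpose_apply]
    ring
  have hmap : Finsupp.mapDomain Sum.swap (pairF m n) = pairF n m := by
    ext s
    cases s with
    | inl i =>
        have : (Sum.inl i : Fin (d+1) ⊕ Fin (d+1)) = Sum.swap (Sum.inr i) := rfl
        rw [this, Finsupp.mapDomain_apply hswap]
        rfl
    | inr j =>
        have : (Sum.inr j : Fin (d+1) ⊕ Fin (d+1)) = Sum.swap (Sum.inl j) := rfl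
        rw [this, Finsupp.mapDomain_apply hswap]
        rfl
  calc MvPolynomial.coeff (pairF m n) (bigS A ^ N)
      = MvPolynomial.coeff (Finsupp.mapDomain Sum.swap (pairF m n))
          (rename Sum.swap (bigS A ^ N)) :=
        (MvPolynomial.coeff_rename_mapDomain Sum.swap hswap _ _).symm
    _ = MvPolynomial.coeff (pairF n m) (bigS Aᵀ ^ N) := by rw [hmap, map_pow, hren]

lemma key {d N : ℕ} (A : Matrix (Fin (d+1)) (Fin (d+1)) ℂ) (m n : Fin (d+1) → ℕ)
    (hm : ∑ i, m i = N) (hn : ∑ i, n i = N) :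
    (Nat.multinomial Finset.univ m : ℂ) * symPowEntry A m n
      = (Nat.multinomial Finset.univ n : ℂ) * symPowEntry Aᵀ n m := by
  rw [← stepA A m n hm, ← stepA Aᵀ n m hn, stepB]

lemma conj_step {d : ℕ} (A : Matrix (Fin (d+1)) (Fin (d+1)) ℂ) (m n : Fin (d+1) → ℕ) :
    symPowEntry Aᴴ m n = starRingEnd ℂ (symPowEntry Aᵀ m n) := by
  rw [symPowEntry, symPowEntry, ← MvPolynomial.coeff_map]
  congr 1
  simp only [map_prod, map_pow, map_sum, _root_.map_mul, MvPolynomial.map_C,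
    MvPolynomial.map_X, Matrix.conjTranspose_apply, Matrix.transpose_apply,
    starRingEnd_apply]

/-- Adjoint form of the Transpose Lemma: `(A*)̄ = B⁻¹ (Ā)* B`. -/
theorem symPow_conjTranspose (d N : ℕ) (A : Matrix (Fin (d+1)) (Fin (d+1)) ℂ) :
    symPow d N Aᴴ = (multinomMat d N)⁻¹ * (symPow d N A)ᴴ * multinomMat d N := by
  funext mm nn
  obtain ⟨m, hm⟩ := mm
  obtain ⟨n, hn⟩ := nn
  have hc : (Nat.multinomial Finset.univ m : ℂ) ≠ 0 := by
    exact_mod_cast (Nat.multinomial_pos _ _).ne'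
  have h := key Aᵀ m n hm hn
  rw [Matrix.transpose_transpose] at h
  have h2 : (Nat.multinomial Finset.univ m : ℂ)
        * starRingEnd ℂ (symPowEntry Aᵀ m n)
      = (Nat.multinomial Finset.univ n : ℂ)
        * starRingEnd ℂ (symPowEntry A n m) := by
    have := congrArg (starRingEnd ℂ) h
    simpa using this
  have hBinv : (multinomMat d N)⁻¹
      = Matrix.diagonal (fun p : MIdx d N => (Nat.multinomial Finset.univ p.1 : ℂ)⁻¹) := by
    apply Matrix.inv_eq_right_inv
    rw [multinomMat, Matrix.diagonal_mul_diagonal]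
    have hv : ∀ p : MIdx d N,
        (Nat.multinomial Finset.univ p.1 : ℂ) * (Nat.multinomial Finset.univ p.1 : ℂ)⁻¹ = 1 :=
      fun p => mul_inv_cancel₀ (Nat.cast_ne_zero.mpr (Nat.multinomial_pos _ _).ne')
    ext i j
    by_cases hij : i = j
    · subst hij
      simp [Matrix.diagonal_apply, hv i]
    · simp [Matrix.diagonal_apply, Matrix.one_apply, hij]
  rw [hBinv, multinomMat]
  show symPowEntry Aᴴ m n = _
  rw [Matrix.mul_diagonal, Matrix.diagonal_mul, Matrix.conjTranspose_apply]
  show _ = _ * starRingEnd ℂ (symPowEntry A n m) * _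
  rw [conj_step]
  field_simp
  linear_combination h2
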